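/- Let r, ℓ > 0 with r ≠ ℓ, and let ρ ∈ (0,1). Set β = (r+ω)(1−ρ) and δ = (ℓ+ω)ρ for some real ω with β, δ > 0. Then κ₊(β,δ) = ρ/(1−ρ) = z(ρ), independently of ω. -/

import Mathlib

theorem kappaPlus_right_boundary (r ℓ ω ρ β δ : ℝ) (hr : 0 < r) (hl : 0 < ℓ) (hrl : r ≠ ℓ)
    (hρ0 : 0 < ρ) (hρ1 : ρ < 1)
    (hβ : β = (r + ω) * (1 - ρ)) (hδ : δ = (ℓ + ω) * ρ)
    (hβpos : 0 < β) (hδpos : 0 < δ) :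
    (1/(2*β)) * (δ - β + r - ℓ + Real.sqrt ((δ - β + r - ℓ)^2 + 4*β*δ)) = ρ / (1 - ρ) := by
  have h1ρ : 0 < 1 - ρ := by linarith
  set z : ℝ := ρ / (1 - ρ) with hz
  have hzpos : 0 < z := div_pos hρ0 h1ρ
  set A : ℝ := δ - β + r - ℓ with hA
  -- key algebraic identity: β z² − A z = δ
  have hkey : β * z ^ 2 - A * z = δ := by
    rw [hA, hβ, hδ, hz]
    field_simp
    ring
  have h2 : 0 < 2 * β * z - A := by
    have hAz : β * z - A = δ / z := by
      field_simp
      nlinarith [hkey]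
    nlinarith [mul_pos hβpos hzpos, div_pos hδpos hzpos]
  have hsq : A ^ 2 + 4 * β * δ = (2 * β * z - A) ^ 2 := by
    nlinarith [hkey]
  rw [hsq, Real.sqrt_sq h2.le]
  field_simp
  ring
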